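/- arXiv:2207.12529 — 5 statements merged into one kernel-verified Lean document; each statement's English description precedes it below -/
import Mathlib

section
/- Let H be a real inner product space, τ: H → [0,∞) a cost function, and S a subset of the unit sphere of H such that τ(f) ≤ sup_{w∈S} |⟨f,w⟩| for all f ∈ H. Then for any f ∈ H and ε > 0, there exist m ≤ ⌊‖f‖²/ε²⌋ points w₁,…,w_m ∈ S and scalars λ₁,…,λ_m ∈ ℝ such that τ(f − Σᵢ λᵢ wᵢ) ≤ ε. -/
open scoped RealInnerProductSpace

private lemma csq' {H : Type*} [NormedAddCommGroup H] [InnerProductSpace ℝ H]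
    {g w : H} (hw : ‖w‖ = 1) : |⟪g, w⟫| ≤ ‖g‖ := by
  calc |⟪g, w⟫| ≤ ‖g‖ * ‖w‖ := abs_real_inner_le_norm g w
  _ = ‖g‖ := by rw [hw, mul_one]

private lemma supble {H : Type*} [NormedAddCommGroup H] [InnerProductSpace ℝ H]
    (S : Set H) (hS : ∀ z ∈ S, ‖z‖ = 1) (g : H) :
    (⨆ w ∈ S, |⟪g, w⟫|) ≤ ‖g‖ := by
  refine Real.iSup_le (fun w => Real.iSup_le (fun hw => csq' (hS w hw)) (norm_nonneg g))
    (norm_nonneg g)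

private lemma auxmain {H : Type*} [NormedAddCommGroup H] [InnerProductSpace ℝ H]
    (τ : H → ℝ) (S : Set H) (hS : ∀ z ∈ S, ‖z‖ = 1)
    (hsep : ∀ f : H, τ f ≤ ⨆ w ∈ S, |⟪f, w⟫|)
    (ε : ℝ) (hε : 0 < ε) :
    ∀ n : ℕ, ∀ g : H, ⌊‖g‖ ^ 2 / ε ^ 2⌋₊ ≤ n →
      ∃ (m : ℕ) (w : Fin m → H) (lam : Fin m → ℝ),
        m ≤ ⌊‖g‖ ^ 2 / ε ^ 2⌋₊ ∧ (∀ i, w i ∈ S) ∧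
        τ (g - ∑ i, lam i • w i) ≤ ε := by
  intro n
  induction n with
  | zero =>
    intro g hg
    refine ⟨0, Fin.elim0, Fin.elim0, Nat.zero_le _, fun i => i.elim0, ?_⟩
    have h1 : ‖g‖ ^ 2 / ε ^ 2 < 1 := by
      have := Nat.le_zero.mp hg
      have := Nat.lt_of_floor_lt (lt_of_le_of_lt hg Nat.zero_lt_one)
      simpa using this
    have h2 : ‖g‖ ^ 2 < ε ^ 2 := by
      rw [div_lt_one (by positivity)] at h1; exact h1
    have h3 : ‖g‖ < ε := by nlinarith [norm_nonneg g]
    have : τ g ≤ ‖g‖ := le_trans (hsep g) (supble S hS g)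
    simp only [Finset.univ_eq_empty, Finset.sum_empty, sub_zero]
    linarith
  | succ n ih =>
    intro g hg
    by_cases h : τ g ≤ ε
    · exact ⟨0, Fin.elim0, Fin.elim0, Nat.zero_le _, fun i => i.elim0, by
        simpa using h⟩
    · push_neg at h
      have h1 : ε < ⨆ w ∈ S, |⟪g, w⟫| := lt_of_lt_of_le h (hsep g)
      obtain ⟨w, hw⟩ := exists_lt_of_lt_ciSup h1
      by_cases hwS : w ∈ S
      swap
      · exfalso
        haveI : IsEmpty (w ∈ S) := ⟨hwS⟩
        rw [Real.iSup_of_isEmpty] at hw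
        linarith
      haveI : Nonempty (w ∈ S) := ⟨hwS⟩
      rw [ciSup_const] at hw
      -- hw : ε < |⟪g, w⟫|
      set c : ℝ := ⟪g, w⟫ with hc
      set g' : H := g - c • w with hg'
      have hwn : ‖w‖ = 1 := hS w hwS
      have hnorm : ‖g'‖ ^ 2 = ‖g‖ ^ 2 - c ^ 2 := by
        have hexp := norm_sub_sq_real g (c • w)
        rw [real_inner_smul_right, norm_smul] at hexp
        rw [hg']
        rw [hexp, hwn]
        simp [abs_mul_abs_self]
        nlinarith [sq_abs c]
      have hc2 : ε ^ 2 < c ^ 2 := by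
        have := sq_abs c
        nlinarith [hw, hε]
      have hdiv : ‖g'‖ ^ 2 / ε ^ 2 + 1 ≤ ‖g‖ ^ 2 / ε ^ 2 := by
        rw [hnorm]
        have hε2 : (0:ℝ) < ε ^ 2 := by positivity
        rw [div_add' _ _ _ (ne_of_gt hε2), div_le_div_iff₀ hε2 hε2]
        nlinarith
      have hfloor : ⌊‖g'‖ ^ 2 / ε ^ 2⌋₊ + 1 ≤ ⌊‖g‖ ^ 2 / ε ^ 2⌋₊ := by
        have h0 : (0:ℝ) ≤ ‖g'‖ ^ 2 / ε ^ 2 := by positivity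
        calc ⌊‖g'‖ ^ 2 / ε ^ 2⌋₊ + 1 = ⌊‖g'‖ ^ 2 / ε ^ 2 + 1⌋₊ := (Nat.floor_add_one h0).symm
        _ ≤ ⌊‖g‖ ^ 2 / ε ^ 2⌋₊ := Nat.floor_le_floor hdiv
      have hle : ⌊‖g'‖ ^ 2 / ε ^ 2⌋₊ ≤ n := by omega
      obtain ⟨m', w', lam', hm', hwS', hτ'⟩ := ih g' hle
      refine ⟨m' + 1, Fin.cons w w', Fin.cons c lam', by omega, ?_, ?_⟩
      · intro i
        refine Fin.cases ?_ ?_ i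
        · simpa using hwS
        · intro j; simpa using hwS' j
      · have hsum : ∑ i : Fin (m' + 1), (Fin.cons c lam' : Fin (m'+1) → ℝ) i •
            (Fin.cons w w' : Fin (m'+1) → H) i = c • w + ∑ i, lam' i • w' i := by
          rw [Fin.sum_univ_succ]
          simp
        rw [hsum, sub_add_eq_sub_sub]
        exact hτ'

/-- **Greedy approximation (energy increment) lemma.**
If `τ : H → [0,∞)` is separated by `S ⊆ {‖z‖ = 1}`, i.e.
`τ f ≤ sup_{w ∈ S} |⟪f, w⟫|`, then every `f` admits an `ε`-approximation (in the cost `τ`)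
by a linear combination of at most `⌊‖f‖² / ε²⌋` elements of `S`. -/
theorem stmt0 {H : Type*} [NormedAddCommGroup H] [InnerProductSpace ℝ H]
    (τ : H → ℝ) (hτ : ∀ f : H, 0 ≤ τ f)
    (S : Set H) (hS : ∀ z ∈ S, ‖z‖ = 1)
    (hsep : ∀ f : H, τ f ≤ ⨆ w ∈ S, |⟪f, w⟫|)
    (f : H) (ε : ℝ) (hε : 0 < ε) :
    ∃ (m : ℕ) (w : Fin m → H) (lam : Fin m → ℝ),
      m ≤ ⌊‖f‖ ^ 2 / ε ^ 2⌋₊ ∧ (∀ i, w i ∈ S) ∧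
      τ (f - ∑ i, lam i • w i) ≤ ε := by
  exact auxmain τ S hS hsep ε hε _ f le_rfl
end

section
/- Let x₁,…,x_m ∈ ℝⁿ, let d ≥ 2 be an integer, and let S ⊆ Sⁿ⁻¹ be any subset of the unit sphere. If ε₁,…,ε_m are independent Rademacher random variables, then E_ε sup_{z∈S} |Σ_{i=1}^m εᵢ ⟨xᵢ,z⟩^d| ≤ 2d (Σ_{i=1}^m ‖xᵢ‖₂^{2d})^{1/2}. -/
open scoped RealInnerProductSpace
open Finset

namespace Stmt3Aux

noncomputable def T (d n : ℕ) (z : EuclideanSpace ℝ (Fin n)) :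
    EuclideanSpace ℝ (Fin d → Fin n) :=
  WithLp.toLp 2 (fun j => ∏ k, z (j k))

lemma inner_T (d n : ℕ) (x z : EuclideanSpace ℝ (Fin n)) :
    ⟪T d n x, T d n z⟫ = ⟪x, z⟫ ^ d := by
  simp only [T, PiLp.inner_apply, PiLp.toLp_apply, RCLike.inner_apply, conj_trivial]
  rw [Finset.sum_pow' Finset.univ (fun i => z i * x i) d, Fintype.piFinset_univ]
  simp [Finset.prod_mul_distrib]

-- orthogonality of Rademacher signs
lemma sign_orth {m : ℕ} {i j : Fin m} (hij : i ≠ j) :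
    ∑ ε : Fin m → Bool, ((if ε i then (1:ℝ) else -1) * (if ε j then (1:ℝ) else -1)) = 0 := by
  apply Finset.sum_ninvolution (g := fun ε => Function.update ε i (!(ε i)))
  · intro ε
    have h1 : Function.update ε i (!(ε i)) i = !(ε i) := Function.update_self _ _ _
    have h2 : Function.update ε i (!(ε i)) j = ε j := Function.update_of_ne hij.symm _ _
    rw [h1, h2]
    cases ε i <;> cases ε j <;> norm_num
  · intro ε _
    intro h
    have := congrFun h i
    rw [Function.update_self] at this
    exact Bool.not_ne_self _ this
  · intro ε; exact Finset.mem_univ _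
  · intro ε
    funext k
    by_cases hk : k = i
    · subst hk; simp
    · simp [Function.update_of_ne hk]

end Stmt3Aux

namespace Stmt3Aux

noncomputable def sg {m : ℕ} (ε : Fin m → Bool) (i : Fin m) : ℝ :=
  if ε i then 1 else -1

lemma sum_sq_norm {m : ℕ} {E : Type*} [NormedAddCommGroup E] [InnerProductSpace ℝ E]
    (v : Fin m → E) :
    ∑ ε : Fin m → Bool, ‖∑ i, sg ε i • v i‖ ^ 2 = 2 ^ m * ∑ i, ‖v i‖ ^ 2 := by
  have expand : ∀ ε : Fin m → Bool,
      ‖∑ i, sg ε i • v i‖ ^ 2 = ∑ i, ∑ j, (sg ε i * sg ε j) * ⟪v i, v j⟫ := by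
    intro ε
    rw [← real_inner_self_eq_norm_sq, sum_inner]
    simp only [inner_sum, real_inner_smul_left, real_inner_smul_right, Finset.mul_sum, mul_assoc]
    congr 1; ext i; congr 1; ext j; ring
  calc ∑ ε : Fin m → Bool, ‖∑ i, sg ε i • v i‖ ^ 2
      = ∑ i, ∑ j, (∑ ε : Fin m → Bool, sg ε i * sg ε j) * ⟪v i, v j⟫ := by
        simp_rw [expand, Finset.sum_mul]
        rw [Finset.sum_comm]
        congr 1; ext i
        rw [Finset.sum_comm]
    _ = ∑ i : Fin m, (2:ℝ) ^ m * ‖v i‖ ^ 2 := by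
        congr 1; ext i
        rw [Finset.sum_eq_single i]
        · have : ∑ ε : Fin m → Bool, sg ε i * sg ε i = 2 ^ m := by
            have h1 : ∀ ε : Fin m → Bool, sg ε i * sg ε i = 1 := by
              intro ε; unfold sg; cases ε i <;> norm_num
            simp [h1, Finset.card_univ]
          rw [this, real_inner_self_eq_norm_sq]
        · intro j _ hji
          have h0 : (∑ ε : Fin m → Bool, sg ε i * sg ε j) = 0 := by
            simp only [sg]; exact sign_orth hji.symm
          rw [h0, zero_mul]
        · intro h; exact absurd (Finset.mem_univ i) h
    _ = 2 ^ m * ∑ i, ‖v i‖ ^ 2 := by rw [Finset.mul_sum]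

end Stmt3Aux

/-- **Khintchine inequality for symmetric tensors.**
For vectors `x₁, …, x_m ∈ ℝⁿ`, an integer `d ≥ 2`, and any subset `S` of the unit sphere,
`𝔼_ε sup_{z ∈ S} |∑ i ε i ⟨x i, z⟩^d| ≤ 2 d (∑ i ‖x i‖^{2d})^{1/2}`,
where the `ε i` are independent Rademacher signs. -/
theorem stmt3 (n m d : ℕ) (hd : 2 ≤ d)
    (x : Fin m → EuclideanSpace ℝ (Fin n))
    (S : Set (EuclideanSpace ℝ (Fin n)))
    (hS : S ⊆ Metric.sphere (0 : EuclideanSpace ℝ (Fin n)) 1) :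
    (∑ ε : Fin m → Bool,
        ⨆ z ∈ S, |∑ i, (if ε i then (1 : ℝ) else -1) * ⟪x i, z⟫ ^ d|) / 2 ^ m
      ≤ 2 * d * Real.sqrt (∑ i, ‖x i‖ ^ (2 * d)) := by
  classical
  set B := ∑ i, ‖x i‖ ^ (2 * d) with hB
  have hBnn : 0 ≤ B := Finset.sum_nonneg fun i _ => by positivity
  set V : (Fin m → Bool) → EuclideanSpace ℝ (Fin d → Fin n) :=
    fun ε => ∑ i, Stmt3Aux.sg ε i • Stmt3Aux.T d n (x i) with hV
  have hTnorm : ∀ i, ‖Stmt3Aux.T d n (x i)‖ ^ 2 = ‖x i‖ ^ (2 * d) := by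
    intro i
    rw [← real_inner_self_eq_norm_sq, Stmt3Aux.inner_T, real_inner_self_eq_norm_sq,
      ← pow_mul]
  have hsum2 : ∑ ε : Fin m → Bool, ‖V ε‖ ^ 2 = 2 ^ m * B := by
    rw [hV]
    rw [Stmt3Aux.sum_sq_norm, hB]
    congr 1
    exact Finset.sum_congr rfl fun i _ => hTnorm i
  have hsup : ∀ ε : Fin m → Bool,
      (⨆ z ∈ S, |∑ i, (if ε i then (1:ℝ) else -1) * ⟪x i, z⟫ ^ d|) ≤ ‖V ε‖ := by
    intro ε
    refine Real.iSup_le (fun z => Real.iSup_le (fun hz => ?_) (norm_nonneg _)) (norm_nonneg _)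
    have hz1 : ‖Stmt3Aux.T d n z‖ = 1 := by
      have h2 : ‖Stmt3Aux.T d n z‖ ^ 2 = 1 := by
        rw [← real_inner_self_eq_norm_sq, Stmt3Aux.inner_T, real_inner_self_eq_norm_sq]
        have hz' : ‖z‖ = 1 := by simpa using hS hz
        simp [hz']
      nlinarith [norm_nonneg (Stmt3Aux.T d n z)]
    have heq : ∑ i, (if ε i then (1:ℝ) else -1) * ⟪x i, z⟫ ^ d = ⟪V ε, Stmt3Aux.T d n z⟫ := by
      rw [hV, sum_inner]
      refine Finset.sum_congr rfl fun i _ => ?_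
      rw [real_inner_smul_left, Stmt3Aux.inner_T]
      simp [Stmt3Aux.sg]
    rw [heq]
    calc |⟪V ε, Stmt3Aux.T d n z⟫| ≤ ‖V ε‖ * ‖Stmt3Aux.T d n z‖ := abs_real_inner_le_norm _ _
      _ = ‖V ε‖ := by rw [hz1, mul_one]
  have hA : (∑ ε : Fin m → Bool, ‖V ε‖) ≤ 2 ^ m * Real.sqrt B := by
    have h1 : (∑ ε : Fin m → Bool, ‖V ε‖) ^ 2 ≤ (2:ℝ) ^ m * (2 ^ m * B) := by
      have h := sq_sum_le_card_mul_sum_sq (s := Finset.univ)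
        (f := fun ε : Fin m → Bool => ‖V ε‖)
      have hcard : ((Finset.univ : Finset (Fin m → Bool)).card : ℝ) = 2 ^ m := by
        simp [Finset.card_univ]
      rw [hcard, hsum2] at h
      exact h
    have ha : 0 ≤ ∑ ε : Fin m → Bool, ‖V ε‖ :=
      Finset.sum_nonneg fun ε _ => norm_nonneg _
    have hc0 : (0:ℝ) ≤ 2 ^ m * Real.sqrt B := by positivity
    have hc : (2 ^ m * Real.sqrt B) ^ 2 = (2:ℝ) ^ m * (2 ^ m * B) := by
      rw [mul_pow, Real.sq_sqrt hBnn]; ring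
    calc (∑ ε : Fin m → Bool, ‖V ε‖) = Real.sqrt ((∑ ε : Fin m → Bool, ‖V ε‖) ^ 2) :=
          (Real.sqrt_sq ha).symm
      _ ≤ Real.sqrt ((2 ^ m * Real.sqrt B) ^ 2) := Real.sqrt_le_sqrt (h1.trans_eq hc.symm)
      _ = 2 ^ m * Real.sqrt B := Real.sqrt_sq hc0
  have h2m : (0:ℝ) < 2 ^ m := by positivity
  calc (∑ ε : Fin m → Bool,
        ⨆ z ∈ S, |∑ i, (if ε i then (1 : ℝ) else -1) * ⟪x i, z⟫ ^ d|) / 2 ^ m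
      ≤ (∑ ε : Fin m → Bool, ‖V ε‖) / 2 ^ m := by
        gcongr with ε hε
        exact hsup ε
    _ ≤ Real.sqrt B := by
        rw [div_le_iff₀ h2m]
        linarith [hA]
    _ ≤ 2 * d * Real.sqrt B := by
        refine le_mul_of_one_le_left (Real.sqrt_nonneg _) ?_
        have : (2:ℝ) ≤ d := by exact_mod_cast hd
        nlinarith
end

section
/- Let T ⊆ ℝ^m and let φⱼ: ℝ → ℝ satisfy |φⱼ(t) − φⱼ(s)| ≤ Lⱼ|t − s| for all t,s and φⱼ(0) = 0, for j = 1,…,m. If ε₁,…,ε_m are independent Rademacher random variables, then E sup_{t∈T} |Σⱼ εⱼ φⱼ(tⱼ)| ≤ 2 E sup_{t∈T} |Σⱼ εⱼ Lⱼ tⱼ|. -/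
open Finset

/-- sign of a Rademacher variable -/
noncomputable def sgn {m : ℕ} (ε : Fin m → Bool) (j : Fin m) : ℝ := if ε j then 1 else -1

lemma sgn_eq {m : ℕ} (ε : Fin m → Bool) (j : Fin m) :
    (if ε j then (1 : ℝ) else -1) = sgn ε j := rfl

lemma sgn_abs {m : ℕ} (ε : Fin m → Bool) (j : Fin m) : |sgn ε j| = 1 := by
  unfold sgn; split <;> simp

lemma sgn_update_ne {m : ℕ} (ε : Fin m → Bool) (a j : Fin m) (b : Bool) (h : j ≠ a) :
    sgn (Function.update ε a b) j = sgn ε j := by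
  unfold sgn; rw [Function.update_of_ne h]

lemma sgn_update_same {m : ℕ} (ε : Fin m → Bool) (a : Fin m) (b : Bool) :
    sgn (Function.update ε a b) a = if b then (1:ℝ) else -1 := by
  unfold sgn; rw [Function.update_self]

/-- pairing: summing over flips of coordinate `a` counts everything twice -/
lemma pair_sum {m : ℕ} (a : Fin m) (h : (Fin m → Bool) → ℝ) :
    ∑ ε : Fin m → Bool, (h (Function.update ε a true) + h (Function.update ε a false))
      = 2 * ∑ ε : Fin m → Bool, h ε := by
  have inv : Function.Involutive (fun ε : Fin m → Bool => Function.update ε a (!(ε a))) := by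
    intro ε; funext j
    by_cases hj : j = a
    · subst hj; simp
    · simp [Function.update_of_ne hj]
  have key : ∀ ε : Fin m → Bool,
      h (Function.update ε a true) + h (Function.update ε a false)
        = h ε + h (Function.update ε a (!(ε a))) := by
    intro ε
    cases hb : ε a
    · have h1 : Function.update ε a false = ε := by rw [← hb]; exact Function.update_eq_self a ε
      simp [h1, hb, add_comm]
    · have h1 : Function.update ε a true = ε := by rw [← hb]; exact Function.update_eq_self a ε
      simp [h1, hb]
  rw [Finset.sum_congr rfl fun ε _ => key ε, Finset.sum_add_distrib]
  have h2 := Equiv.sum_comp (inv.toPerm _) h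
  simp only [Function.Involutive.coe_toPerm] at h2
  rw [h2]; ring

/-- the one-dimensional comparison for positive parts -/
lemma core1d {ι : Type*} [Nonempty ι] (c s : ι → ℝ) (φ : ℝ → ℝ) (L : ℝ) (hL : 0 ≤ L)
    (hLip : ∀ x y : ℝ, |φ y - φ x| ≤ L * |y - x|) (h0 : φ 0 = 0)
    (C : ℝ) (hbd : ∀ i, |c i| + L * |s i| ≤ C) :
    max (⨆ i, c i + φ (s i)) 0 + max (⨆ i, c i - φ (s i)) 0 ≤
      max (⨆ i, c i + L * s i) 0 + max (⨆ i, c i - L * s i) 0 := by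
  have habs : ∀ x, |φ x| ≤ L * |x| := fun x => by simpa [h0] using hLip 0 x
  have hLs : ∀ i, |L * s i| = L * |s i| := fun i => by rw [abs_mul, abs_of_nonneg hL]
  have bddAp : BddAbove (Set.range fun i => c i + L * s i) := by
    refine ⟨C, ?_⟩; rintro _ ⟨i, rfl⟩
    have h3 := hbd i; have h1 := le_abs_self (c i)
    have h2 : L * s i ≤ L * |s i| := by rw [← hLs i]; exact le_abs_self _
    simp only; linarith
  have bddAm : BddAbove (Set.range fun i => c i - L * s i) := by
    refine ⟨C, ?_⟩; rintro _ ⟨i, rfl⟩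
    have h3 := hbd i; have h1 := le_abs_self (c i)
    have h2 : -(L * s i) ≤ L * |s i| := by rw [← hLs i]; exact neg_le_abs _
    simp only; linarith
  have bddBp : BddAbove (Set.range fun i => c i + φ (s i)) := by
    refine ⟨C, ?_⟩; rintro _ ⟨i, rfl⟩
    have h3 := hbd i; have h1 := le_abs_self (c i)
    have h2 : φ (s i) ≤ L * |s i| := (le_abs_self _).trans (habs _)
    simp only; linarith
  have bddBm : BddAbove (Set.range fun i => c i - φ (s i)) := by
    refine ⟨C, ?_⟩; rintro _ ⟨i, rfl⟩
    have h3 := hbd i; have h1 := le_abs_self (c i)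
    have h2 : -(φ (s i)) ≤ L * |s i| := (neg_le_abs _).trans (habs _)
    simp only; linarith
  set Ap := ⨆ i, c i + L * s i with hApdef
  set Am := ⨆ i, c i - L * s i with hAmdef
  set Bp := ⨆ i, c i + φ (s i) with hBpdef
  set Bm := ⨆ i, c i - φ (s i) with hBmdef
  have k1 : Bp ≤ max Ap Am := by
    refine ciSup_le fun i => ?_
    have hApi : c i + L * s i ≤ Ap := le_ciSup bddAp i
    have hAmi : c i - L * s i ≤ Am := le_ciSup bddAm i
    have h2 : φ (s i) ≤ |L * s i| := by rw [hLs i]; exact (le_abs_self _).trans (habs _)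
    rcases abs_cases (L * s i) with ⟨h, _⟩ | ⟨h, _⟩
    · have : c i + φ (s i) ≤ c i + L * s i := by linarith
      exact this.trans (hApi.trans (le_max_left _ _))
    · have : c i + φ (s i) ≤ c i - L * s i := by linarith
      exact this.trans (hAmi.trans (le_max_right _ _))
  have k2 : Bm ≤ max Ap Am := by
    refine ciSup_le fun i => ?_
    have hApi : c i + L * s i ≤ Ap := le_ciSup bddAp i
    have hAmi : c i - L * s i ≤ Am := le_ciSup bddAm i
    have h2 : -(φ (s i)) ≤ |L * s i| := by rw [hLs i]; exact (neg_le_abs _).trans (habs _)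
    rcases abs_cases (L * s i) with ⟨h, _⟩ | ⟨h, _⟩
    · have : c i - φ (s i) ≤ c i + L * s i := by linarith
      exact this.trans (hApi.trans (le_max_left _ _))
    · have : c i - φ (s i) ≤ c i - L * s i := by linarith
      exact this.trans (hAmi.trans (le_max_right _ _))
  have pt : ∀ i j, (c i + φ (s i)) + (c j - φ (s j)) ≤ Ap + Am := by
    intro i j
    have hij := (abs_le.1 (hLip (s j) (s i))).2
    have hApi : c i + L * s i ≤ Ap := le_ciSup bddAp i
    have hAmj : c j - L * s j ≤ Am := le_ciSup bddAm j
    have hApj : c j + L * s j ≤ Ap := le_ciSup bddAp j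
    have hAmi : c i - L * s i ≤ Am := le_ciSup bddAm i
    rcases le_total (s j) (s i) with h | h
    · have he : |s i - s j| = s i - s j := abs_of_nonneg (by linarith)
      rw [he] at hij
      have hexp : L * (s i - s j) = L * s i - L * s j := by ring
      rw [hexp] at hij
      linarith
    · have he : |s i - s j| = s j - s i := by rw [abs_sub_comm]; exact abs_of_nonneg (by linarith)
      rw [he] at hij
      have hexp : L * (s j - s i) = L * s j - L * s i := by ring
      rw [hexp] at hij
      linarith
  have k3 : Bp + Bm ≤ Ap + Am := by
    have h3 : Bp ≤ Ap + Am - Bm := by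
      refine ciSup_le fun i => ?_
      have h4 : Bm ≤ Ap + Am - (c i + φ (s i)) := ciSup_le fun j => by
        have := pt i j; linarith
      linarith
    linarith
  -- final arithmetic
  have hm : max Ap Am ≤ max Ap 0 + max Am 0 := by
    refine max_le ?_ ?_
    · exact (le_max_left Ap 0).trans (le_add_of_nonneg_right (le_max_right Am 0))
    · exact (le_max_left Am 0).trans (le_add_of_nonneg_left (le_max_right Ap 0))
  have nAp : Ap ≤ max Ap 0 := le_max_left _ _
  have nAm : Am ≤ max Am 0 := le_max_left _ _
  have zAp : (0:ℝ) ≤ max Ap 0 := le_max_right _ _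
  have zAm : (0:ℝ) ≤ max Am 0 := le_max_right _ _
  rcases le_total Bp 0 with h1 | h1 <;> rcases le_total Bm 0 with h2 | h2
  · rw [max_eq_right h1, max_eq_right h2]; linarith
  · rw [max_eq_right h1, max_eq_left h2]; linarith [k2.trans hm]
  · rw [max_eq_left h1, max_eq_right h2]; linarith [k1.trans hm]
  · rw [max_eq_left h1, max_eq_left h2]; linarith

/-- one coordinate replacement step -/
lemma step {m : ℕ} (T : Set (Fin m → ℝ)) (hne : T.Nonempty) (M : ℝ)
    (hM : ∀ t ∈ T, ∀ j, |t j| ≤ M)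
    (ν ν' : Fin m → ℝ → ℝ) (L : Fin m → ℝ) (hL : ∀ j, 0 < L j) (a : Fin m)
    (hee : ∀ j, j ≠ a → ν j = ν' j)
    (hνa : ∀ x y : ℝ, |ν a y - ν a x| ≤ L a * |y - x|) (hνa0 : ν a 0 = 0)
    (hν'a : ν' a = fun x => L a * x)
    (hgrow : ∀ j x, |ν j x| ≤ L j * |x|) :
    ∑ ε : Fin m → Bool, max (⨆ t : T, ∑ j, sgn ε j * ν j (t.1 j)) 0 ≤
      ∑ ε : Fin m → Bool, max (⨆ t : T, ∑ j, sgn ε j * ν' j (t.1 j)) 0 := by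
  haveI : Nonempty T := hne.to_subtype
  set h : (Fin m → Bool) → ℝ := fun ε => max (⨆ t : T, ∑ j, sgn ε j * ν j (t.1 j)) 0 with hdef
  set h' : (Fin m → Bool) → ℝ := fun ε => max (⨆ t : T, ∑ j, sgn ε j * ν' j (t.1 j)) 0 with h'def
  have main : ∀ ε : Fin m → Bool,
      h (Function.update ε a true) + h (Function.update ε a false) ≤
        h' (Function.update ε a true) + h' (Function.update ε a false) := by
    intro ε
    set c : T → ℝ := fun t => ∑ j ∈ Finset.univ.erase a, sgn ε j * ν j (t.1 j) with cdef
    set s : T → ℝ := fun t => t.1 a with sdef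
    have ceq : ∀ (b : Bool) (t : T),
        ∑ j, sgn (Function.update ε a b) j * ν j (t.1 j)
          = c t + (if b then (1:ℝ) else -1) * ν a (t.1 a) := by
      intro b t
      rw [← Finset.sum_erase_add _ _ (Finset.mem_univ a), sgn_update_same]
      congr 1
      exact Finset.sum_congr rfl fun j hj => by
        rw [sgn_update_ne _ _ _ _ (Finset.mem_erase.1 hj).1]
    have ceq' : ∀ (b : Bool) (t : T),
        ∑ j, sgn (Function.update ε a b) j * ν' j (t.1 j)
          = c t + (if b then (1:ℝ) else -1) * (L a * t.1 a) := by
      intro b t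
      rw [← Finset.sum_erase_add _ _ (Finset.mem_univ a), sgn_update_same, hν'a]
      congr 1
      exact Finset.sum_congr rfl fun j hj => by
        rw [sgn_update_ne _ _ _ _ (Finset.mem_erase.1 hj).1,
          ← hee j (Finset.mem_erase.1 hj).1]
    have e1 : (fun t : T => ∑ j, sgn (Function.update ε a true) j * ν j (t.1 j))
        = fun t => c t + ν a (s t) := by
      funext t; rw [ceq true t]; simp [sdef]
    have e2 : (fun t : T => ∑ j, sgn (Function.update ε a false) j * ν j (t.1 j))
        = fun t => c t - ν a (s t) := by
      funext t; rw [ceq false t]; simp [sdef]; ring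
    have e3 : (fun t : T => ∑ j, sgn (Function.update ε a true) j * ν' j (t.1 j))
        = fun t => c t + L a * s t := by
      funext t; rw [ceq' true t]; simp [sdef]
    have e4 : (fun t : T => ∑ j, sgn (Function.update ε a false) j * ν' j (t.1 j))
        = fun t => c t - L a * s t := by
      funext t; rw [ceq' false t]; simp [sdef]; ring
    have hbd : ∀ t : T, |c t| + L a * |s t| ≤ ∑ j, L j * M := by
      intro t
      have h1 : |c t| ≤ ∑ j ∈ Finset.univ.erase a, L j * M := by
        refine (Finset.abs_sum_le_sum_abs _ _).trans (Finset.sum_le_sum fun j _ => ?_)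
        rw [abs_mul, sgn_abs, one_mul]
        exact (hgrow j _).trans (mul_le_mul_of_nonneg_left (hM t.1 t.2 j) (hL j).le)
      have h2 : L a * |s t| ≤ L a * M :=
        mul_le_mul_of_nonneg_left (hM t.1 t.2 a) (hL a).le
      have h3 : (∑ j ∈ Finset.univ.erase a, L j * M) + L a * M = ∑ j, L j * M :=
        Finset.sum_erase_add _ _ (Finset.mem_univ a)
      linarith
    have := core1d c s (ν a) (L a) (hL a).le hνa hνa0 (∑ j, L j * M) hbd
    simp only [hdef, h'def, e1, e2, e3, e4]
    exact this
  have sum_main := Finset.sum_le_sum (fun ε (_ : ε ∈ Finset.univ) => main ε)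
  rw [pair_sum a h, pair_sum a h'] at sum_main
  linarith

/-- contraction: replace all Lipschitz functions by linear ones, for positive parts -/
lemma contraction {m : ℕ} (T : Set (Fin m → ℝ)) (hne : T.Nonempty) (M : ℝ)
    (hM : ∀ t ∈ T, ∀ j, |t j| ≤ M)
    (φ : Fin m → ℝ → ℝ) (L : Fin m → ℝ) (hL : ∀ j, 0 < L j)
    (hLip : ∀ j, ∀ s t : ℝ, |φ j t - φ j s| ≤ L j * |t - s|)
    (h0 : ∀ j, φ j 0 = 0) :
    ∑ ε : Fin m → Bool, max (⨆ t : T, ∑ j, sgn ε j * φ j (t.1 j)) 0 ≤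
      ∑ ε : Fin m → Bool, max (⨆ t : T, ∑ j, sgn ε j * (L j * t.1 j)) 0 := by
  have habs : ∀ j x, |φ j x| ≤ L j * |x| := fun j x => by simpa [h0 j] using hLip j 0 x
  have key : ∀ S : Finset (Fin m),
      ∑ ε : Fin m → Bool,
          max (⨆ t : T, ∑ j, sgn ε j * (if j ∈ S then φ j (t.1 j) else L j * t.1 j)) 0 ≤
        ∑ ε : Fin m → Bool, max (⨆ t : T, ∑ j, sgn ε j * (L j * t.1 j)) 0 := by
    intro S
    induction S using Finset.induction_on with
    | empty => simp
    | @insert a S ha ih =>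
      refine le_trans ?_ ih
      have hstep := step T hne M hM
        (fun j x => if j ∈ insert a S then φ j x else L j * x)
        (fun j x => if j ∈ S then φ j x else L j * x) L hL a
        (fun j hj => by
          funext x
          show (if j ∈ insert a S then φ j x else L j * x) = (if j ∈ S then φ j x else L j * x)
          simp [Finset.mem_insert, hj])
        (fun x y => by
          show |(if a ∈ insert a S then φ a y else L a * y) -
            (if a ∈ insert a S then φ a x else L a * x)| ≤ L a * |y - x|
          simpa [Finset.mem_insert_self] using hLip a x y)
        (by
          show (if a ∈ insert a S then φ a 0 else L a * 0) = 0
          simp [Finset.mem_insert_self, h0 a])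
        (by funext x; show (if a ∈ S then φ a x else L a * x) = L a * x; rw [if_neg ha])
        (fun j x => by
          show |if j ∈ insert a S then φ j x else L j * x| ≤ L j * |x|
          by_cases hj : j ∈ insert a S
          · rw [if_pos hj]; exact habs j x
          · rw [if_neg hj, abs_mul, abs_of_pos (hL j)])
      exact hstep
  have := key Finset.univ
  simpa using this

/-- convert a bounded-index `⨆ t ∈ T` over ℝ to a subtype sup, for nonneg functions -/
lemma bsup_eq {α : Type*} (T : Set α) (hne : T.Nonempty) (f : α → ℝ)
    (h0 : ∀ t ∈ T, 0 ≤ f t) (C : ℝ) (hC : ∀ t ∈ T, f t ≤ C) :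
    (⨆ t ∈ T, f t) = ⨆ t : T, f t.1 := by
  haveI : Nonempty T := hne.to_subtype
  have hbdd : BddAbove (Set.range fun t : T => f t.1) :=
    ⟨C, by rintro _ ⟨t, rfl⟩; exact hC t.1 t.2⟩
  obtain ⟨t0, ht0⟩ := hne
  have hpos : (0:ℝ) ≤ ⨆ t : T, f t.1 := le_trans (h0 t0 ht0) (le_ciSup hbdd ⟨t0, ht0⟩)
  apply le_antisymm
  · exact Real.iSup_le (fun t => Real.iSup_le (fun ht => le_ciSup hbdd ⟨t, ht⟩) hpos) hpos
  · refine ciSup_le fun t => ?_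
    have houter : BddAbove (Set.range fun t : α => ⨆ _ : t ∈ T, f t) := by
      refine ⟨max C 0, ?_⟩; rintro _ ⟨t, rfl⟩
      by_cases ht : t ∈ T
      · show (⨆ _ : t ∈ T, f t) ≤ max C 0
        haveI : Nonempty (t ∈ T : Prop) := ⟨ht⟩
        rw [ciSup_const]; exact le_max_of_le_left (hC t ht)
      · show (⨆ _ : t ∈ T, f t) ≤ max C 0
        haveI : IsEmpty (t ∈ T : Prop) := ⟨ht⟩
        rw [Real.iSup_of_isEmpty]; exact le_max_right _ _
    haveI : Nonempty (t.1 ∈ T : Prop) := ⟨t.2⟩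
    calc f t.1 = ⨆ _ : t.1 ∈ T, f t.1 := ciSup_const.symm
      _ ≤ ⨆ t : α, ⨆ _ : t ∈ T, f t := le_ciSup houter t.1

/-- **Comparison principle (contraction principle) for Rademacher averages.**
If `T ⊆ ℝ^m` is bounded and each `φ j : ℝ → ℝ` is `L j`-Lipschitz with `φ j 0 = 0`, then
`𝔼_ε sup_{t ∈ T} |∑ j ε j φ j (t j)| ≤ 2 𝔼_ε sup_{t ∈ T} |∑ j ε j (L j) (t j)|`. -/
theorem stmt4 (m : ℕ) (T : Set (Fin m → ℝ)) (hT : Bornology.IsBounded T)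
    (φ : Fin m → ℝ → ℝ) (L : Fin m → ℝ) (hL : ∀ j, 0 < L j)
    (hLip : ∀ j, ∀ s t : ℝ, |φ j t - φ j s| ≤ L j * |t - s|)
    (h0 : ∀ j, φ j 0 = 0) :
    (∑ ε : Fin m → Bool,
        ⨆ t ∈ T, |∑ j, (if ε j then (1 : ℝ) else -1) * φ j (t j)|) / 2 ^ m
      ≤ 2 * ((∑ ε : Fin m → Bool,
          ⨆ t ∈ T, |∑ j, (if ε j then (1 : ℝ) else -1) * (L j * t j)|) / 2 ^ m) := by
  by_cases hne : T.Nonempty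
  swap
  · rw [Set.not_nonempty_iff_eq_empty] at hne
    subst hne
    simp
  simp only [sgn_eq]
  haveI : Nonempty T := hne.to_subtype
  obtain ⟨M, hMn⟩ := isBounded_iff_forall_norm_le.1 hT
  have hM : ∀ t ∈ T, ∀ j, |t j| ≤ M := fun t ht j => by
    have h1 := norm_le_pi_norm t j
    rw [Real.norm_eq_abs] at h1
    exact h1.trans (hMn t ht)
  have habs : ∀ j x, |φ j x| ≤ L j * |x| := fun j x => by simpa [h0 j] using hLip j 0 x
  set C := ∑ j, L j * M with hCdef
  have hbF : ∀ (ε : Fin m → Bool), ∀ t ∈ T, |∑ j, sgn ε j * φ j (t j)| ≤ C := by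
    intro ε t ht
    refine (Finset.abs_sum_le_sum_abs _ _).trans (Finset.sum_le_sum fun j _ => ?_)
    rw [abs_mul, sgn_abs, one_mul]
    exact (habs j _).trans (mul_le_mul_of_nonneg_left (hM t ht j) (hL j).le)
  have hbG : ∀ (ε : Fin m → Bool), ∀ t ∈ T, |∑ j, sgn ε j * (L j * t j)| ≤ C := by
    intro ε t ht
    refine (Finset.abs_sum_le_sum_abs _ _).trans (Finset.sum_le_sum fun j _ => ?_)
    rw [abs_mul, sgn_abs, one_mul, abs_mul, abs_of_pos (hL j)]
    exact mul_le_mul_of_nonneg_left (hM t ht j) (hL j).le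
  have e1 : ∀ ε : Fin m → Bool,
      (⨆ t ∈ T, |∑ j, sgn ε j * φ j (t j)|) = ⨆ t : T, |∑ j, sgn ε j * φ j (t.1 j)| :=
    fun ε => bsup_eq T hne _ (fun t _ => abs_nonneg _) C (hbF ε)
  have e5 : ∀ ε : Fin m → Bool,
      (⨆ t ∈ T, |∑ j, sgn ε j * (L j * t j)|) = ⨆ t : T, |∑ j, sgn ε j * (L j * t.1 j)| :=
    fun ε => bsup_eq T hne _ (fun t _ => abs_nonneg _) C (hbG ε)
  have bddF : ∀ ε : Fin m → Bool,
      BddAbove (Set.range fun t : T => ∑ j, sgn ε j * φ j (t.1 j)) :=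
    fun ε => ⟨C, by rintro _ ⟨t, rfl⟩; exact (le_abs_self _).trans (hbF ε t.1 t.2)⟩
  have bddN : ∀ ε : Fin m → Bool,
      BddAbove (Set.range fun t : T => ∑ j, sgn ε j * (-(φ j (t.1 j)))) := by
    intro ε
    refine ⟨C, ?_⟩; rintro _ ⟨t, rfl⟩
    have hNF : ∑ j, sgn ε j * (-(φ j (t.1 j))) = -(∑ j, sgn ε j * φ j (t.1 j)) := by
      simp [mul_neg]
    show (∑ j, sgn ε j * (-(φ j (t.1 j)))) ≤ C
    rw [hNF]
    exact (neg_le_abs _).trans (hbF ε t.1 t.2)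
  have bddGa : ∀ ε : Fin m → Bool,
      BddAbove (Set.range fun t : T => |∑ j, sgn ε j * (L j * t.1 j)|) :=
    fun ε => ⟨C, by rintro _ ⟨t, rfl⟩; exact hbG ε t.1 t.2⟩
  have stepA : ∀ ε : Fin m → Bool,
      (⨆ t : T, |∑ j, sgn ε j * φ j (t.1 j)|) ≤
        max (⨆ t : T, ∑ j, sgn ε j * φ j (t.1 j)) 0 +
          max (⨆ t : T, ∑ j, sgn ε j * (-(φ j (t.1 j)))) 0 := by
    intro ε
    refine ciSup_le fun t => ?_
    have hNF : ∑ j, sgn ε j * (-(φ j (t.1 j))) = -(∑ j, sgn ε j * φ j (t.1 j)) := by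
      simp [mul_neg]
    rcases abs_cases (∑ j, sgn ε j * φ j (t.1 j)) with ⟨h, _⟩ | ⟨h, _⟩
    · rw [h]
      exact le_trans ((le_ciSup (bddF ε) t).trans (le_max_left _ 0))
        (le_add_of_nonneg_right (le_max_right _ 0))
    · rw [h, ← hNF]
      exact le_trans ((le_ciSup (bddN ε) t).trans (le_max_left _ 0))
        (le_add_of_nonneg_left (le_max_right _ 0))
  have stepC : ∀ ε : Fin m → Bool,
      max (⨆ t : T, ∑ j, sgn ε j * (L j * t.1 j)) 0 ≤
        ⨆ t : T, |∑ j, sgn ε j * (L j * t.1 j)| := by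
    intro ε
    refine max_le (ciSup_le fun t => (le_abs_self _).trans (le_ciSup (bddGa ε) t)) ?_
    exact (abs_nonneg _).trans (le_ciSup (bddGa ε) (Classical.arbitrary T))
  have contrF := contraction T hne M hM φ L hL hLip h0
  have contrN := contraction T hne M hM (fun j x => -(φ j x)) L hL
    (fun j s t => by
      have : -(φ j t) - -(φ j s) = -(φ j t - φ j s) := by ring
      rw [this, abs_neg]; exact hLip j s t)
    (fun j => by simp [h0 j])
  have main : (∑ ε : Fin m → Bool, ⨆ t ∈ T, |∑ j, sgn ε j * φ j (t j)|) ≤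
      2 * ∑ ε : Fin m → Bool, ⨆ t ∈ T, |∑ j, sgn ε j * (L j * t j)| := by
    calc (∑ ε : Fin m → Bool, ⨆ t ∈ T, |∑ j, sgn ε j * φ j (t j)|)
        = ∑ ε : Fin m → Bool, ⨆ t : T, |∑ j, sgn ε j * φ j (t.1 j)| :=
          Finset.sum_congr rfl fun ε _ => e1 ε
      _ ≤ ∑ ε : Fin m → Bool,
            (max (⨆ t : T, ∑ j, sgn ε j * φ j (t.1 j)) 0 +
              max (⨆ t : T, ∑ j, sgn ε j * (-(φ j (t.1 j)))) 0) :=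
          Finset.sum_le_sum fun ε _ => stepA ε
      _ = (∑ ε : Fin m → Bool, max (⨆ t : T, ∑ j, sgn ε j * φ j (t.1 j)) 0) +
            ∑ ε : Fin m → Bool, max (⨆ t : T, ∑ j, sgn ε j * (-(φ j (t.1 j)))) 0 :=
          Finset.sum_add_distrib
      _ ≤ (∑ ε : Fin m → Bool, max (⨆ t : T, ∑ j, sgn ε j * (L j * t.1 j)) 0) +
            ∑ ε : Fin m → Bool, max (⨆ t : T, ∑ j, sgn ε j * (L j * t.1 j)) 0 :=
          add_le_add contrF contrN
      _ = 2 * ∑ ε : Fin m → Bool, max (⨆ t : T, ∑ j, sgn ε j * (L j * t.1 j)) 0 := by ring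
      _ ≤ 2 * ∑ ε : Fin m → Bool, ⨆ t : T, |∑ j, sgn ε j * (L j * t.1 j)| := by
          have := Finset.sum_le_sum fun (ε : Fin m → Bool) (_ : ε ∈ Finset.univ) => stepC ε
          linarith
      _ = 2 * ∑ ε : Fin m → Bool, ⨆ t ∈ T, |∑ j, sgn ε j * (L j * t j)| := by
          rw [Finset.sum_congr rfl fun ε _ => (e5 ε).symm]
  have h2m : (0:ℝ) < 2 ^ m := by positivity
  calc (∑ ε : Fin m → Bool, ⨆ t ∈ T, |∑ j, sgn ε j * φ j (t j)|) / 2 ^ m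
      ≤ (2 * ∑ ε : Fin m → Bool, ⨆ t ∈ T, |∑ j, sgn ε j * (L j * t j)|) / 2 ^ m := by
        gcongr
    _ = 2 * ((∑ ε : Fin m → Bool, ⨆ t ∈ T, |∑ j, sgn ε j * (L j * t j)|) / 2 ^ m) := by
        ring
end

section
/- Let δ_k ≥ 0 be a sequence satisfying δ_{k+1} ≤ (1 − γ_k)δ_k + 2γ_k² with γ_k = 2/(k+1) for all k ≥ 0. Then δ_{k+1} ≤ 8/(k+1) for all k ≥ 0. -/
/-- **Frank–Wolfe recursion.** If `δ k ≥ 0` satisfies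
`δ (k+1) ≤ (1 - γ k) δ k + 2 γ k²` with `γ k = 2/(k+1)` for all `k ≥ 0`,
then `δ (k+1) ≤ 8/(k+1)` for all `k ≥ 0`. -/
theorem stmt15 (δ : ℕ → ℝ) (hδ : ∀ k, 0 ≤ δ k)
    (hrec : ∀ k : ℕ,
      δ (k + 1) ≤ (1 - 2 / ((k : ℝ) + 1)) * δ k + 2 * (2 / ((k : ℝ) + 1)) ^ 2) :
    ∀ k : ℕ, δ (k + 1) ≤ 8 / ((k : ℝ) + 1) := by
  intro k
  induction k with
  | zero =>
      have h := hrec 0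
      have h0 := hδ 0
      norm_num at h ⊢
      linarith
  | succ n ih =>
      have h := hrec (n + 1)
      have hn : (0:ℝ) < (n:ℝ) + 1 := by positivity
      have hn2 : (0:ℝ) < (n:ℝ) + 2 := by positivity
      push_cast at h ⊢
      have hcoef : (0:ℝ) ≤ 1 - 2 / ((n:ℝ) + 1 + 1) := by
        rw [sub_nonneg, div_le_one (by linarith)]; linarith
      have h1 : (1 - 2 / ((n:ℝ) + 1 + 1)) * δ (n + 1)
          ≤ (1 - 2 / ((n:ℝ) + 1 + 1)) * (8 / ((n:ℝ) + 1)) :=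
        mul_le_mul_of_nonneg_left ih hcoef
      have key : (1 - 2 / ((n:ℝ) + 1 + 1)) * (8 / ((n:ℝ) + 1))
          + 2 * (2 / ((n:ℝ) + 1 + 1)) ^ 2 ≤ 8 / ((n:ℝ) + 1 + 1) := by
        have h2 : ((n:ℝ)+1+1) ≠ 0 := by positivity
        have h3 : ((n:ℝ)+1) ≠ 0 := by positivity
        field_simp
        nlinarith [sq_nonneg ((n:ℝ))]
      linarith
end

section
/- Let f be an n-variate symmetric d-tensor (homogeneous degree-d polynomial), let 2 ≤ r ≤ ∞, and ε > 0. Then there exists a symmetric d-tensor h with ‖f − h‖_r ≤ ε and symmetric tensor rank srank(h) ≤ ‖f‖²_{HS}/ε², where srank(h) is the minimal m such that h = Σ_{i=1}^m cᵢ vᵢ^{⊗d} with cᵢ ∈ ℝ, vᵢ ∈ Sⁿ⁻¹, ‖·‖_r is the L^r norm on the sphere, and ‖·‖_{HS} is the Hilbert–Schmidt (Bombieri–Weyl) norm. -/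
open MeasureTheory MvPolynomial

/-- The uniform (rotation-invariant) probability measure on the unit sphere `Sⁿ⁻¹ ⊆ ℝⁿ`. -/
noncomputable def sphereUniform (n : ℕ) :
    Measure (Metric.sphere (0 : EuclideanSpace ℝ (Fin n)) 1) :=
  ((volume : Measure (EuclideanSpace ℝ (Fin n))).toSphere Set.univ)⁻¹ •
    (volume : Measure (EuclideanSpace ℝ (Fin n))).toSphere

/-- Evaluation of an `n`-variate polynomial at a point of the unit sphere. -/
noncomputable def sphereEval {n : ℕ} (g : MvPolynomial (Fin n) ℝ)
    (x : Metric.sphere (0 : EuclideanSpace ℝ (Fin n)) 1) : ℝ :=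
  MvPolynomial.eval (fun i => (x : EuclideanSpace ℝ (Fin n)) i) g

/-- The `L^r` norm of a polynomial with respect to the uniform probability measure on the
unit sphere: `‖g‖_r = (∫_{Sⁿ⁻¹} |g(x)|^r dσ(x))^{1/r}`. -/
noncomputable def sphereLrNorm (n : ℕ) (g : MvPolynomial (Fin n) ℝ) (r : ℝ) : ℝ :=
  (∫ x, |sphereEval g x| ^ r ∂(sphereUniform n)) ^ (1 / r)

/-- The sup norm of a polynomial on the unit sphere: `‖g‖_∞ = max_{x ∈ Sⁿ⁻¹} |g(x)|`. -/
noncomputable def sphereSupNorm (n : ℕ) (g : MvPolynomial (Fin n) ℝ) : ℝ :=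
  ⨆ x : Metric.sphere (0 : EuclideanSpace ℝ (Fin n)) 1, |sphereEval g x|

/-- The linear form `x ↦ ⟨v, x⟩` as a polynomial; its `d`-th power is the polynomial of the
rank-one symmetric tensor `v^{⊗d}`. -/
noncomputable def linForm {n : ℕ} (v : EuclideanSpace ℝ (Fin n)) : MvPolynomial (Fin n) ℝ :=
  ∑ i, MvPolynomial.C (v i) * MvPolynomial.X i

/-- `h` has symmetric tensor rank at most `m`: `h = ∑_{i=1}^m c i ⋅ (v i)^{⊗d}` with
`v i` unit vectors. -/
def SrankLE {n : ℕ} (d : ℕ) (h : MvPolynomial (Fin n) ℝ) (m : ℕ) : Prop :=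
  ∃ (c : Fin m → ℝ) (v : Fin m → EuclideanSpace ℝ (Fin n)),
    (∀ i, ‖v i‖ = 1) ∧ h = ∑ i, c i • (linForm (v i)) ^ d

/-- The Hilbert–Schmidt (Bombieri–Weyl) norm of a symmetric tensor in the monomial index:
`‖f‖²_HS = ∑_α f_α² / (d choose α)`. -/
noncomputable def hsNorm {n : ℕ} (f : MvPolynomial (Fin n) ℝ) : ℝ :=
  Real.sqrt (∑ α ∈ f.support,
    (MvPolynomial.coeff α f) ^ 2 / (Nat.multinomial α.support α : ℝ))

lemma multinomial_univ_eq {n : ℕ} (α : Fin n →₀ ℕ) :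
    Nat.multinomial Finset.univ ⇑α = Nat.multinomial α.support ⇑α := by
  have hprod : ∏ i ∈ α.support, Nat.factorial (α i) = ∏ i : Fin n, Nat.factorial (α i) := by
    refine Finset.prod_subset (Finset.subset_univ _) fun i _ hi => ?_
    simp [Finsupp.notMem_support_iff.mp hi]
  have hsum : ∑ i ∈ α.support, α i = ∑ i : Fin n, α i := by
    refine Finset.sum_subset (Finset.subset_univ _) fun i _ hi => ?_
    simp [Finsupp.notMem_support_iff.mp hi]
  have h1 := Nat.multinomial_spec Finset.univ ⇑α
  have h2 := Nat.multinomial_spec α.support ⇑α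
  rw [hprod] at h2
  rw [hsum] at h2
  have hpos : 0 < ∏ i : Fin n, Nat.factorial (α i) := Finset.prod_pos fun i _ => Nat.factorial_pos _
  exact Nat.eq_of_mul_eq_mul_left hpos (h1.trans h2.symm)

lemma coeff_linForm_pow {n d : ℕ} (v : EuclideanSpace ℝ (Fin n)) (α : Fin n →₀ ℕ)
    (hα : α.degree = d) :
    MvPolynomial.coeff α ((linForm v) ^ d) =
      (Nat.multinomial α.support ⇑α : ℝ) * ∏ i, v i ^ α i := by
  have hterm : ∀ k : Fin n → ℕ,
      ∏ i, (MvPolynomial.C (v i) * MvPolynomial.X i) ^ k i =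
        MvPolynomial.C (∏ i, v i ^ k i) *
          MvPolynomial.monomial (∑ i, Finsupp.single i (k i)) (1 : ℝ) := by
    intro k
    simp_rw [mul_pow, ← MvPolynomial.C_pow, Finset.prod_mul_distrib, MvPolynomial.X_pow_eq_monomial,
      ← map_prod, MvPolynomial.monomial_sum_one]
  have hsumuniv : ∑ i : Fin n, α i = d := by
    rw [← hα, Finsupp.degree]
    exact (Finset.sum_subset (Finset.subset_univ _) fun i _ hi => by
      simp [Finsupp.notMem_support_iff.mp hi]).symm
  rw [linForm, Finset.sum_pow_eq_sum_piAntidiag, MvPolynomial.coeff_sum]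
  rw [Finset.sum_eq_single_of_mem (⇑α)]
  · rw [hterm, ← mul_assoc, ← MvPolynomial.C_eq_coe_nat, ← MvPolynomial.C_mul,
      MvPolynomial.coeff_C_mul, MvPolynomial.coeff_monomial, if_pos, mul_one,
      multinomial_univ_eq]
    ext j
    simp [Finsupp.single_apply]
  · rw [Finset.mem_piAntidiag]
    exact ⟨hsumuniv, fun i _ => Finset.mem_univ i⟩
  · intro k hk hkα
    rw [hterm, ← mul_assoc, ← MvPolynomial.C_eq_coe_nat, ← MvPolynomial.C_mul,
      MvPolynomial.coeff_C_mul, MvPolynomial.coeff_monomial, if_neg, mul_zero]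
    intro h
    apply hkα
    funext j
    have := DFunLike.congr_fun h j
    simp only [Finsupp.coe_finset_sum, Finset.sum_apply, Finsupp.single_apply] at this
    simpa using this

noncomputable def Qf {n : ℕ} (g : MvPolynomial (Fin n) ℝ) : ℝ :=
  ∑ α ∈ g.support, (MvPolynomial.coeff α g) ^ 2 / (Nat.multinomial α.support α : ℝ)

lemma Qf_nonneg {n : ℕ} (g : MvPolynomial (Fin n) ℝ) : 0 ≤ Qf g :=
  Finset.sum_nonneg fun α _ => div_nonneg (sq_nonneg _) (Nat.cast_nonneg _)

lemma Qf_eq_sum {n : ℕ} {g : MvPolynomial (Fin n) ℝ} {s : Finset (Fin n →₀ ℕ)}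
    (hs : g.support ⊆ s) :
    Qf g = ∑ α ∈ s, (MvPolynomial.coeff α g) ^ 2 / (Nat.multinomial α.support α : ℝ) := by
  refine Finset.sum_subset hs fun α _ hα => ?_
  rw [MvPolynomial.notMem_support_iff.mp hα]
  simp

lemma degree_eq_of_mem_support {n d : ℕ} {g : MvPolynomial (Fin n) ℝ}
    (hg : g.IsHomogeneous d) {α : Fin n →₀ ℕ} (hα : α ∈ g.support) : α.degree = d := by
  by_contra hne
  exact MvPolynomial.mem_support_iff.mp hα (hg.coeff_eq_zero hne)

lemma inner_sum_eq_eval {n d : ℕ} {g : MvPolynomial (Fin n) ℝ} (hg : g.IsHomogeneous d)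
    (v : EuclideanSpace ℝ (Fin n)) {s : Finset (Fin n →₀ ℕ)} (hs : g.support ⊆ s) :
    ∑ α ∈ s, MvPolynomial.coeff α g * MvPolynomial.coeff α ((linForm v) ^ d) /
        (Nat.multinomial α.support α : ℝ) =
      MvPolynomial.eval (fun i => v i) g := by
  rw [← Finset.sum_subset hs (fun α _ hα => by
    rw [MvPolynomial.notMem_support_iff.mp hα]; simp)]
  rw [MvPolynomial.eval_eq']
  refine Finset.sum_congr rfl fun α hα => ?_
  rw [coeff_linForm_pow v α (degree_eq_of_mem_support hg hα)]
  have hw : (Nat.multinomial α.support ⇑α : ℝ) ≠ 0 := by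
    exact_mod_cast (Nat.multinomial_pos _ _).ne'
  field_simp

lemma Qf_sub_smul {n d : ℕ} {g : MvPolynomial (Fin n) ℝ} (hg : g.IsHomogeneous d)
    (v : EuclideanSpace ℝ (Fin n)) (c : ℝ) :
    Qf (g - c • (linForm v) ^ d) =
      Qf g - 2 * c * MvPolynomial.eval (fun i => v i) g +
        c ^ 2 * MvPolynomial.eval (fun i => v i) ((linForm v) ^ d) := by
  have hlin : (linForm (n := n) v).IsHomogeneous 1 := by
    rw [linForm]
    apply MvPolynomial.IsHomogeneous.sum
    intro i _
    simpa using (MvPolynomial.isHomogeneous_X ℝ i).C_mul (v i)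
  have hp : ((linForm v) ^ d).IsHomogeneous d := by
    simpa using hlin.pow d
  set p := (linForm v) ^ d with hpdef
  set s : Finset (Fin n →₀ ℕ) := g.support ∪ p.support with hsdef
  have hsub : (g - c • p).support ⊆ s := by
    intro α hα
    rw [MvPolynomial.mem_support_iff] at hα
    by_contra hns
    simp only [hsdef, Finset.mem_union, not_or, MvPolynomial.mem_support_iff, not_not] at hns
    apply hα
    rw [MvPolynomial.coeff_sub, MvPolynomial.coeff_smul, hns.1, hns.2]
    simp
  rw [Qf_eq_sum hsub]
  have hterm : ∀ α ∈ s,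
      (MvPolynomial.coeff α (g - c • p)) ^ 2 / (Nat.multinomial α.support α : ℝ) =
        (MvPolynomial.coeff α g) ^ 2 / (Nat.multinomial α.support α : ℝ) -
          2 * c * (MvPolynomial.coeff α g * MvPolynomial.coeff α p /
            (Nat.multinomial α.support α : ℝ)) +
          c ^ 2 * (MvPolynomial.coeff α p * MvPolynomial.coeff α p /
            (Nat.multinomial α.support α : ℝ)) := by
    intro α _
    rw [MvPolynomial.coeff_sub, MvPolynomial.coeff_smul, smul_eq_mul]
    ring
  rw [Finset.sum_congr rfl hterm]
  rw [Finset.sum_add_distrib, Finset.sum_sub_distrib, ← Finset.mul_sum, ← Finset.mul_sum]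
  rw [inner_sum_eq_eval hg v (s := s) Finset.subset_union_left,
    inner_sum_eq_eval hp v (s := s) Finset.subset_union_right,
    ← Qf_eq_sum (s := s) Finset.subset_union_left]

lemma eval_linForm_pow_self {n d : ℕ} {v : EuclideanSpace ℝ (Fin n)} (hv : ‖v‖ = 1) :
    MvPolynomial.eval (fun i => v i) ((linForm v) ^ d) = 1 := by
  have h1 : MvPolynomial.eval (fun i => v i) (linForm v) = ∑ i, v i * v i := by
    simp [linForm]
  have h2 : ∑ i, v i * v i = 1 := by
    have := EuclideanSpace.norm_eq v
    rw [hv] at this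
    have h3 : ∑ i, ‖v i‖ ^ 2 = 1 := Real.sqrt_eq_one.mp this.symm
    calc ∑ i, v i * v i = ∑ i, ‖v i‖ ^ 2 := by
          refine Finset.sum_congr rfl fun i _ => ?_
          rw [Real.norm_eq_abs, sq_abs]; ring
      _ = 1 := h3
  rw [map_pow, h1, h2, one_pow]

lemma smul_pow_homog {n d : ℕ} (v : EuclideanSpace ℝ (Fin n)) (c : ℝ) :
    (c • (linForm v) ^ d).IsHomogeneous d := by
  have hlin : (linForm (n := n) v).IsHomogeneous 1 := by
    rw [linForm]
    apply MvPolynomial.IsHomogeneous.sum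
    intro i _
    simpa using (MvPolynomial.isHomogeneous_X ℝ i).C_mul (v i)
  have hp : ((linForm v) ^ d).IsHomogeneous d := by simpa using hlin.pow d
  rw [MvPolynomial.smul_eq_C_mul]
  exact hp.C_mul c

lemma greedy {n d : ℕ} {ε : ℝ} (hε : 0 < ε) :
    ∀ k : ℕ, ∀ g : MvPolynomial (Fin n) ℝ, g.IsHomogeneous d → Qf g < k * ε ^ 2 →
      ∃ (h : MvPolynomial (Fin n) ℝ) (m : ℕ), h.IsHomogeneous d ∧ SrankLE d h m ∧
        (m : ℝ) * ε ^ 2 ≤ Qf g ∧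
        ∀ v : EuclideanSpace ℝ (Fin n), ‖v‖ = 1 →
          |MvPolynomial.eval (fun i => v i) (g - h)| ≤ ε := by
  intro k
  induction k with
  | zero =>
    intro g hg hQ
    exact absurd hQ (by simpa using (Qf_nonneg g).not_gt)
  | succ k ih =>
    intro g hg hQ
    by_cases hb : ∀ v : EuclideanSpace ℝ (Fin n), ‖v‖ = 1 →
        |MvPolynomial.eval (fun i => v i) g| ≤ ε
    · refine ⟨0, 0, MvPolynomial.isHomogeneous_zero _ _ _,
        ⟨Fin.elim0, Fin.elim0, fun i => i.elim0, by simp⟩,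
        by simpa using Qf_nonneg g, by simpa using hb⟩
    · push_neg at hb
      obtain ⟨v, hv, hgv⟩ := hb
      set c := MvPolynomial.eval (fun i => v i) g with hc
      set g' := g - c • (linForm v) ^ d with hg'def
      have hg' : g'.IsHomogeneous d := hg.sub (smul_pow_homog (d := d) v c)
      have hQeq : Qf g' = Qf g - c ^ 2 := by
        rw [hg'def, Qf_sub_smul hg v c, eval_linForm_pow_self hv, ← hc]
        ring
      have hc2 : ε ^ 2 < c ^ 2 := by nlinarith [sq_abs c, abs_nonneg c]
      have hQ' : Qf g' < k * ε ^ 2 := by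
        push_cast at hQ
        rw [hQeq]; nlinarith
      obtain ⟨h', m', hh', hsr', hm', hb'⟩ := ih g' hg' hQ'
      refine ⟨h' + c • (linForm v) ^ d, m' + 1, hh'.add (smul_pow_homog v c), ?_, ?_, ?_⟩
      · obtain ⟨cs, vs, hvs, hsum⟩ := hsr'
        refine ⟨Fin.cons c cs, Fin.cons v vs, ?_, ?_⟩
        · intro i
          refine Fin.cases ?_ ?_ i
          · simpa using hv
          · intro j; simpa using hvs j
        · rw [hsum, Fin.sum_univ_succ]
          simp only [Fin.cons_zero, Fin.cons_succ]
          ring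
      · push_cast
        rw [hQeq] at hm'
        nlinarith
      · intro u hu
        have : g - (h' + c • (linForm v) ^ d) = g' - h' := by rw [hg'def]; ring
        rw [this]
        exact hb' u hu

lemma sphere_nonempty' {n : ℕ} (hn : 1 ≤ n) :
    Nonempty (Metric.sphere (0 : EuclideanSpace ℝ (Fin n)) 1) := by
  refine ⟨⟨EuclideanSpace.single (⟨0, hn⟩ : Fin n) (1 : ℝ), ?_⟩⟩
  rw [mem_sphere_zero_iff_norm, EuclideanSpace.norm_single]
  norm_num

lemma sphereUniform_univ_le {n : ℕ} : sphereUniform n Set.univ ≤ 1 := by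
  rw [sphereUniform, Measure.smul_apply, smul_eq_mul]
  exact ENNReal.inv_mul_le_one _

instance sphereUniform_finite (n : ℕ) : IsFiniteMeasure (sphereUniform n) :=
  ⟨lt_of_le_of_lt sphereUniform_univ_le ENNReal.one_lt_top⟩

lemma continuous_sphereEval {n : ℕ} (g : MvPolynomial (Fin n) ℝ) :
    Continuous (sphereEval g) := by
  have hcoord : Continuous fun x : Metric.sphere (0 : EuclideanSpace ℝ (Fin n)) 1 =>
      (fun i => (x : EuclideanSpace ℝ (Fin n)) i) :=
    continuous_pi fun i => (EuclideanSpace.proj i).continuous.comp continuous_subtype_val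
  exact (MvPolynomial.continuous_eval g).comp hcoord

lemma sphereSupNorm_le {n : ℕ} (hn : 1 ≤ n) {g : MvPolynomial (Fin n) ℝ} {ε : ℝ}
    (hb : ∀ v : EuclideanSpace ℝ (Fin n), ‖v‖ = 1 →
      |MvPolynomial.eval (fun i => v i) g| ≤ ε) :
    sphereSupNorm n g ≤ ε := by
  have : Nonempty (Metric.sphere (0 : EuclideanSpace ℝ (Fin n)) 1) := sphere_nonempty' hn
  refine ciSup_le fun x => ?_
  exact hb _ (mem_sphere_zero_iff_norm.mp x.2)

lemma sphereLrNorm_le {n : ℕ} {g : MvPolynomial (Fin n) ℝ} {ε r : ℝ}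
    (hε : 0 < ε) (hr : 2 ≤ r)
    (hb : ∀ x : Metric.sphere (0 : EuclideanSpace ℝ (Fin n)) 1, |sphereEval g x| ≤ ε) :
    sphereLrNorm n g r ≤ ε := by
  have hr0 : (0 : ℝ) < r := by linarith
  have hcont : Continuous fun x : Metric.sphere (0 : EuclideanSpace ℝ (Fin n)) 1 =>
      |sphereEval g x| ^ r :=
    ((continuous_sphereEval g).abs).rpow_const fun x => Or.inr hr0.le
  have hint : Integrable (fun x => |sphereEval g x| ^ r) (sphereUniform n) :=
    hcont.integrable_of_hasCompactSupport (HasCompactSupport.of_compactSpace _)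
  have hmono : (∫ x, |sphereEval g x| ^ r ∂(sphereUniform n)) ≤ ε ^ r := by
    calc (∫ x, |sphereEval g x| ^ r ∂(sphereUniform n))
        ≤ ∫ _, ε ^ r ∂(sphereUniform n) :=
          integral_mono hint (integrable_const _) fun x =>
            Real.rpow_le_rpow (abs_nonneg _) (hb x) hr0.le
      _ = ((sphereUniform n) Set.univ).toReal * ε ^ r := by
          rw [integral_const, smul_eq_mul]; rfl
      _ ≤ 1 * ε ^ r := by
          refine mul_le_mul_of_nonneg_right ?_ (Real.rpow_nonneg hε.le r)
          exact le_trans (ENNReal.toReal_mono ENNReal.one_ne_top sphereUniform_univ_le)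
            (by norm_num)
      _ = ε ^ r := one_mul _
  have hnonneg : 0 ≤ ∫ x, |sphereEval g x| ^ r ∂(sphereUniform n) :=
    integral_nonneg fun x => Real.rpow_nonneg (abs_nonneg _) r
  calc sphereLrNorm n g r
      ≤ (ε ^ r) ^ (1 / r) := Real.rpow_le_rpow hnonneg hmono (by positivity)
    _ = ε := by
        rw [← Real.rpow_mul hε.le, mul_one_div_cancel hr0.ne', Real.rpow_one]

/-- **Approximate rank via energy increment (Theorem 3.1).** For every symmetric `d`-tensor
`f`, every `2 ≤ r ≤ ∞`, and every `ε > 0`, there is a symmetric `d`-tensor `h` with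
`‖f - h‖_r ≤ ε` and `srank(h) ≤ ‖f‖²_HS/ε²`. -/
theorem stmt17 (n d : ℕ) (hn : 1 ≤ n)
    (f : MvPolynomial (Fin n) ℝ) (hf : f.IsHomogeneous d) (ε : ℝ) (hε : 0 < ε) :
    (∀ r : ℝ, 2 ≤ r →
      ∃ (h : MvPolynomial (Fin n) ℝ) (m : ℕ), h.IsHomogeneous d ∧ SrankLE d h m ∧
        (m : ℝ) ≤ hsNorm f ^ 2 / ε ^ 2 ∧ sphereLrNorm n (f - h) r ≤ ε) ∧
    (∃ (h : MvPolynomial (Fin n) ℝ) (m : ℕ), h.IsHomogeneous d ∧ SrankLE d h m ∧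
      (m : ℝ) ≤ hsNorm f ^ 2 / ε ^ 2 ∧ sphereSupNorm n (f - h) ≤ ε) := by
  have hsq : hsNorm f ^ 2 = Qf f := Real.sq_sqrt (Qf_nonneg f)
  obtain ⟨k, hk⟩ := exists_nat_gt (Qf f / ε ^ 2)
  have hQk : Qf f < k * ε ^ 2 := by
    rw [div_lt_iff₀ (by positivity)] at hk
    linarith
  obtain ⟨h, m, hh, hsr, hm, hb⟩ := greedy hε k f hf hQk
  have hmdiv : (m : ℝ) ≤ hsNorm f ^ 2 / ε ^ 2 := by
    rw [hsq, le_div_iff₀ (by positivity)]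
    exact hm
  have hbx : ∀ x : Metric.sphere (0 : EuclideanSpace ℝ (Fin n)) 1,
      |sphereEval (f - h) x| ≤ ε := fun x => hb _ (mem_sphere_zero_iff_norm.mp x.2)
  exact ⟨fun r hr => ⟨h, m, hh, hsr, hmdiv, sphereLrNorm_le hε hr hbx⟩,
    ⟨h, m, hh, hsr, hmdiv, sphereSupNorm_le hn hb⟩⟩
end
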